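/- Let M be a Hilbert C*-module with a Hilbert dual, with extended inner product ⟨·,·⟩_{M'} on M', and let M be a thick submodule of a Hilbert C*-module N, with i : N → M' the induced injection i(n) = n̂|_M. If the right ideal J_f is essential in A for every f ∈ M', then ⟨n, n'⟩_N = ⟨i(n), i(n')⟩_{M'} for all n, n' ∈ N. -/

import Mathlib

open scoped RightActions

/-- The class `CStarModule` as it stood in Mathlib of December 2024: a Hilbert C*-module
with a *right* action of `A` (through `Aᵐᵒᵖ`), whose inner product is `A`-linear on the right. -/
class RightCStarModule (A : outParam <| Type*) (E : Type*) [NonUnitalSemiring A] [StarRing A]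
    [Module ℂ A] [AddCommGroup E] [Module ℂ E] [PartialOrder A] [SMul Aᵐᵒᵖ E] [Norm A] [Norm E]
    extends Inner A E where
  inner_add_right {x} {y} {z} : inner x (y + z) = inner x y + inner x z
  inner_self_nonneg {x} : 0 ≤ inner x x
  inner_self {x} : inner x x = 0 ↔ x = 0
  inner_op_smul_right {a : A} {x y : E} : inner x (y <• a) = inner x y * a
  inner_smul_right_complex {z : ℂ} {x} {y} : inner x (z • y) = z • inner x y
  star_inner x y : star (inner x y) = inner y x
  norm_eq_sqrt_norm_inner_self x : ‖x‖ = √‖inner x x‖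

section Defs

variable {A : Type*} [CStarAlgebra A] [PartialOrder A] [StarOrderedRing A]
variable {E : Type*} [NormedAddCommGroup E] [NormedSpace ℂ E] [SMul Aᵐᵒᵖ E] [RightCStarModule A E]

/-- Membership in the dual module `M'`: a bounded `A`-antilinear functional on `E`
(the functional `f` plays the role of `m ↦ ⟨m, f⟩`). -/
def IsDualFunctional (f : E → A) : Prop :=
  (∀ x y, f (x + y) = f x + f y) ∧
  (∀ (c : ℂ) (x : E), f (c • x) = (starRingEnd ℂ) c • f x) ∧
  (∀ (x : E) (a : A), f (x <• a) = star a * f x) ∧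
  ∃ C : ℝ, ∀ x, ‖f x‖ ≤ C * ‖x‖

/-- The canonical image `m̂` of `m ∈ M` in the dual module: `m̂ x = ⟨x, m⟩`. -/
def mhat (m : E) : E → A := fun x => inner A x m

/-- The right action of `A` on dual functionals: `f·a`. -/
def dualAct (f : E → A) (a : A) : E → A := fun x => f x * a

/-- The right ideal `J_f = {a ∈ A : f·a ∈ M}`. -/
def Jf (f : E → A) : Set A := {a : A | ∃ m : E, dualAct f a = mhat m}

/-- The right ideal `J_f` is essential in `A`. -/
def JfEssential (f : E → A) : Prop := ∀ a : A, (∀ j ∈ Jf f, a * j = 0) → a = 0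

/-- The norm of a functional in the dual module (operator norm). -/
noncomputable def dualNorm (f : E → A) : ℝ :=
  sInf {C : ℝ | 0 ≤ C ∧ ∀ x, ‖f x‖ ≤ C * ‖x‖}

end Defs

section DualInner

variable {A : Type*} [CStarAlgebra A] [PartialOrder A] [StarOrderedRing A]
variable {E : Type*} [NormedAddCommGroup E] [NormedSpace ℂ E] [SMul Aᵐᵒᵖ E] [RightCStarModule A E]

/-- `inn` is an extension of the inner product of `M` to the dual module `M'`,
making `M'` a (complete) Hilbert C*-module; this is the meaning of
"`M` is a Hilbert C*-module with a Hilbert dual".  -/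
structure IsDualInner (inn : (E → A) → (E → A) → A) : Prop where
  extends_inner : ∀ m n : E, inn (mhat m) (mhat n) = inner A m n
  eval : ∀ f : E → A, IsDualFunctional f → ∀ m : E, f m = inn (mhat m) f
  add_right : ∀ f g h : E → A, inn f (g + h) = inn f g + inn f h
  act_right : ∀ (f g : E → A) (a : A), inn f (dualAct g a) = inn f g * a
  star_inn : ∀ f g : E → A, star (inn f g) = inn g f
  nonneg : ∀ f : E → A, IsDualFunctional f → 0 ≤ inn f f
  definite : ∀ f : E → A, IsDualFunctional f → inn f f = 0 → f = 0
  complete : ∀ u : ℕ → E → A, (∀ n, IsDualFunctional (u n)) →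
    (∀ ε : ℝ, 0 < ε → ∃ N, ∀ p q, N ≤ p → N ≤ q → ‖inn (u p - u q) (u p - u q)‖ < ε) →
    ∃ g : E → A, IsDualFunctional g ∧
      Filter.Tendsto (fun n => ‖inn (u n - g) (u n - g)‖) Filter.atTop (nhds 0)

end DualInner

section Incl

variable {A : Type*} [CStarAlgebra A] [PartialOrder A] [StarOrderedRing A]
variable {E : Type*} [NormedAddCommGroup E] [NormedSpace ℂ E] [SMul Aᵐᵒᵖ E] [RightCStarModule A E]
variable {F : Type*} [NormedAddCommGroup F] [NormedSpace ℂ F] [SMul Aᵐᵒᵖ F] [RightCStarModule A F]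

/-- `α : M → N` realizes `M` as a Hilbert C*-submodule of `N` (the inner product of `M`
being the restriction of that of `N`). -/
structure IsModuleInclusion (α : E → F) : Prop where
  map_add : ∀ x y, α (x + y) = α x + α y
  map_smulC : ∀ (c : ℂ) (x : E), α (c • x) = c • α x
  map_smulA : ∀ (x : E) (a : A), α (x <• a) = α x <• a
  map_inner : ∀ x y : E, (inner A (α x) (α y) : A) = inner A x y
  injective : Function.Injective α

/-- `M` is a thick submodule of `N`, i.e. `M^⊥ = 0` in `N`. -/
def IsThick (α : E → F) : Prop := ∀ z : F, (∀ m : E, (inner A (α m) z : A) = 0) → z = 0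

/-- The functional `n̂|_M ∈ M'` induced by `n ∈ N`. -/
def restrictFun (α : E → F) (n : F) : E → A := fun m => inner A (α m) n

end Incl

variable {A : Type*} [CStarAlgebra A] [PartialOrder A] [StarOrderedRing A]
variable {E : Type*} [NormedAddCommGroup E] [NormedSpace ℂ E] [SMul Aᵐᵒᵖ E] [RightCStarModule A E]
variable {F : Type*} [NormedAddCommGroup F] [NormedSpace ℂ F] [SMul Aᵐᵒᵖ F] [RightCStarModule A F]

namespace RCM

theorem inner_add_left {x y z : E} : inner A (x + y) z = inner A x z + inner A y z := by
  rw [← RightCStarModule.star_inner z (x + y), RightCStarModule.inner_add_right, star_add,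
    RightCStarModule.star_inner, RightCStarModule.star_inner]

theorem inner_sub_right {x y z : E} : inner A x (y - z) = inner A x y - inner A x z := by
  rw [eq_sub_iff_add_eq, ← RightCStarModule.inner_add_right, sub_add_cancel]

theorem inner_sub_left {x y z : E} : inner A (x - y) z = inner A x z - inner A y z := by
  rw [eq_sub_iff_add_eq, ← inner_add_left, sub_add_cancel]

theorem inner_op_smul_left {a : A} {x y : E} : inner A (x <• a) y = star a * inner A x y := by
  rw [← RightCStarModule.star_inner y, RightCStarModule.inner_op_smul_right, star_mul,
    RightCStarModule.star_inner]

theorem inner_smul_left_complex {z : ℂ} {x y : E} :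
    inner A (z • x) y = star z • inner A x y := by
  rw [← RightCStarModule.star_inner y, RightCStarModule.inner_smul_right_complex, star_smul,
    RightCStarModule.star_inner]

theorem inner_smul_right_real {r : ℝ} {x y : E} : inner A x (r • y) = r • inner A x y := by
  rw [← Complex.coe_smul, RightCStarModule.inner_smul_right_complex, Complex.coe_smul]

theorem inner_smul_left_real {r : ℝ} {x y : E} : inner A (r • x) y = r • inner A x y := by
  rw [← Complex.coe_smul, inner_smul_left_complex, Complex.star_def, Complex.conj_ofReal,
    Complex.coe_smul]

theorem norm_sq_eq (x : E) : ‖x‖ ^ 2 = ‖inner A x x‖ := by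
  rw [RightCStarModule.norm_eq_sqrt_norm_inner_self x, Real.sq_sqrt (norm_nonneg _)]

theorem star_mul_le (x y : E) :
    star (inner A x y) * inner A x y ≤ ‖x‖ ^ 2 • inner A y y := by
  rcases eq_or_ne x 0 with h | h
  · have h0 : inner A x y = 0 := by
      rw [h, ← sub_self (0 : E), inner_sub_left, sub_self]
    rw [h0, star_zero, zero_mul]
    exact smul_nonneg (by positivity) RightCStarModule.inner_self_nonneg
  · have hpos : 0 < ‖x‖ := by
      rw [RightCStarModule.norm_eq_sqrt_norm_inner_self (A := A) x, Real.sqrt_pos, norm_pos_iff]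
      intro H
      exact h (RightCStarModule.inner_self.mp H)
    set b := inner A x y with hb
    set t := ‖x‖ ^ 2 with ht
    have hxx : star b * inner A x x * b ≤ t • (star b * b) := by
      have := CStarAlgebra.star_left_conjugate_le_norm_smul (a := b) (b := inner A x x)
        (hb := RightCStarModule.star_inner x x)
      rw [ht, norm_sq_eq x]
      exact this
    have h0 : (0 : A) ≤ inner A (x <• b - t • y) (x <• b - t • y) :=
      RightCStarModule.inner_self_nonneg
    have hyx : inner A y x = star b := by rw [hb, RightCStarModule.star_inner]
    rw [inner_sub_left, inner_sub_right, inner_sub_right, inner_op_smul_left, inner_op_smul_left,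
      RightCStarModule.inner_op_smul_right, RightCStarModule.inner_op_smul_right,
      inner_smul_left_real, inner_smul_left_real, inner_smul_right_real, inner_smul_right_real,
      hyx, ← hb, smul_mul_assoc] at h0
    have h1 : t • (star b * b) ≤ t • (t • inner A y y) := by
      have h2 : star b * inner A x x * b - t • (star b * b) ≤ 0 := sub_nonpos.mpr hxx
      rw [← sub_nonneg]
      have h3 : t • (t • inner A y y) - t • (star b * b) =
          (star b * (inner A x x * b) - star b * (t • b) - (t • (star b * b) - t • (t • inner A y y)))
            - (star b * inner A x x * b - t • (star b * b)) := by
        rw [mul_smul_comm, mul_assoc]; abel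
      rw [h3]
      exact sub_nonneg.mpr (le_trans h2 h0)
    exact (smul_le_smul_iff_of_pos_left (by rw [ht]; exact pow_pos hpos 2)).mp h1

theorem norm_inner_le (x y : E) : ‖inner A x y‖ ≤ ‖x‖ * ‖y‖ := by
  have := calc ‖inner A x y‖ ^ 2 = ‖star (inner A x y) * inner A x y‖ := by
                rw [CStarRing.norm_star_mul_self, pow_two]
    _ ≤ ‖‖x‖ ^ 2 • inner A y y‖ :=
                CStarAlgebra.norm_le_norm_of_nonneg_of_le (star_mul_self_nonneg _) (star_mul_le x y)
    _ = ‖x‖ ^ 2 * ‖inner A y y‖ := by rw [norm_smul, Real.norm_of_nonneg (by positivity)]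
    _ = (‖x‖ * ‖y‖) ^ 2 := by rw [← norm_sq_eq y, mul_pow]
  exact (pow_le_pow_iff_left₀ (norm_nonneg _)
    (mul_nonneg (norm_nonneg _) (norm_nonneg _)) (by norm_num)).mp this

end RCM

/-- If `M` has a Hilbert dual, `M` is thick in `N` (inducing the injection
`i : N → M'`, `i n = n̂|_M`), and `J_f` is essential for every `f ∈ M'`, then
the inner product of `N` coincides with the extended inner product of `M'`:
`⟨n, n'⟩_N = ⟨i n, i n'⟩_{M'}`. -/
theorem inner_eq_dualInner_of_essential
    (inn : (E → A) → (E → A) → A) (hinn : IsDualInner inn)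
    (α : E → F) (hα : IsModuleInclusion α) (hthick : IsThick α)
    (hess : ∀ f : E → A, IsDualFunctional f → JfEssential f) :
    ∀ n n' : F, (inner A n n' : A) = inn (restrictFun α n) (restrictFun α n') := by
  have hdual : ∀ n : F, IsDualFunctional (restrictFun α n) := by
    intro n
    refine ⟨fun x y => ?_, fun c x => ?_, fun x a => ?_, ‖n‖, fun x => ?_⟩
    · simp [restrictFun, hα.map_add, RCM.inner_add_left]
    · simp [restrictFun, hα.map_smulC, RCM.inner_smul_left_complex, Complex.star_def]
    · simp [restrictFun, hα.map_smulA, RCM.inner_op_smul_left]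
    · have h1 : ‖(inner A (α x) n : A)‖ ≤ ‖α x‖ * ‖n‖ := RCM.norm_inner_le (α x) n
      have h2 : ‖α x‖ = ‖x‖ := by
        have hsq : ‖α x‖ ^ 2 = ‖x‖ ^ 2 := by
          rw [RCM.norm_sq_eq (α x), hα.map_inner, ← RCM.norm_sq_eq x]
        nlinarith [norm_nonneg (α x), norm_nonneg x]
      calc ‖restrictFun α n x‖ ≤ ‖α x‖ * ‖n‖ := h1
        _ = ‖n‖ * ‖x‖ := by rw [h2]; ring
  intro n n'
  have hf := hdual n
  have hg := hdual n'
  have key : ∀ a ∈ Jf (restrictFun α n'),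
      ((inner A n n' : A) - inn (restrictFun α n) (restrictFun α n')) * a = 0 := by
    rintro a ⟨m, hm⟩
    have hsub : n' <• a = α m := by
      have := hthick (n' <• a - α m) (fun x => by
        have hx := congrFun hm x
        simp only [dualAct, restrictFun, mhat] at hx
        rw [RCM.inner_sub_right, RightCStarModule.inner_op_smul_right, hx, hα.map_inner,
          sub_self])
      exact sub_eq_zero.mp this
    have e1 : (inner A n n' : A) * a = inner A n (α m) := by
      rw [← RightCStarModule.inner_op_smul_right, hsub]
    have e2 : inn (restrictFun α n) (restrictFun α n') * a = inner A n (α m) := by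
      rw [← hinn.act_right, hm, ← hinn.star_inn, ← hinn.eval _ hf m]
      simp [restrictFun, RightCStarModule.star_inner]
    rw [sub_mul, e1, e2, sub_self]
  have := hess (restrictFun α n') hg _ key
  exact sub_eq_zero.mp this
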